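/- If G is a nonhamiltonian graph on n ≥ 3 vertices, then the number of edges of G is at most binomial(n-1, 2) + 1. -/

import Mathlib

open Finset SimpleGraph

variable {V : Type*} {G : SimpleGraph V}

lemma walk_of_fn (q : ℕ → V) : ∀ (k : ℕ),
    (∀ i, i + 1 ≤ k → G.Adj (q i) (q (i+1))) →
    ∃ p : G.Walk (q 0) (q k), p.support = (List.range (k+1)).map q ∧
      p.edges = (List.range k).map (fun i => s(q i, q (i+1))) := by
  intro k
  induction k with
  | zero => exact fun _ => ⟨.nil, by simp [List.range_succ], by simp⟩
  | succ k ih =>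
    intro h
    obtain ⟨p, hs, he⟩ := ih (fun i hi => h i (by omega))
    refine ⟨p.concat (h k le_rfl), ?_, ?_⟩
    · rw [SimpleGraph.Walk.support_concat, hs, List.range_succ, List.map_append]; simp [List.range_succ]
    · rw [SimpleGraph.Walk.edges_concat, he, List.range_succ, List.map_append,
        List.concat_eq_append]; simp [List.range_succ]

lemma isHamiltonian_of_cycleFn [Fintype V] [DecidableEq V] {n : ℕ} (hn : 3 ≤ n)
    (hcard : Fintype.card V = n) (q : ℕ → V)
    (hinj : ∀ i < n, ∀ j < n, q i = q j → i = j)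
    (hadj : ∀ i, i + 1 < n → G.Adj (q i) (q (i+1)))
    (hwrap : G.Adj (q (n-1)) (q 0)) : G.IsHamiltonian := by
  obtain ⟨p, hs, he⟩ := walk_of_fn q (n-1) (fun i hi => hadj i (by omega))
  have hnodup : ((List.range (n-1+1)).map q).Nodup := by
    refine List.nodup_range.map_on ?_
    intro i hi j hj hij
    exact hinj i (by simp at hi; omega) j (by simp at hj; omega) hij
  have hmem : ∀ v : V, v ∈ (List.range (n-1+1)).map q := by
    intro v
    have himg : Finset.image q (Finset.range n) = Finset.univ := by
      apply Finset.eq_univ_of_card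
      rw [Finset.card_image_of_injOn, Finset.card_range, hcard]
      intro i hi j hj hij
      exact hinj i (Finset.mem_range.mp hi) j (Finset.mem_range.mp hj) hij
    have : v ∈ Finset.image q (Finset.range n) := himg ▸ Finset.mem_univ v
    obtain ⟨i, hi, rfl⟩ := Finset.mem_image.mp this
    rw [Finset.mem_range] at hi
    simp only [List.mem_map, List.mem_range]
    exact ⟨i, by omega, rfl⟩
  have hpath : p.IsPath := (Walk.isPath_def p).mpr (hs ▸ hnodup)
  have hedge : s(q 0, q (n-1)) ∉ p.edges := by
    rw [he]
    simp only [List.mem_map, List.mem_range, not_exists, not_and]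
    intro i hi hcontra
    rw [Sym2.eq_iff] at hcontra
    rcases hcontra with ⟨h1, h2⟩ | ⟨h1, h2⟩
    · have e1 := hinj i (by omega) 0 (by omega) h1
      have e2 := hinj (i+1) (by omega) (n-1) (by omega) h2
      omega
    · have e1 := hinj (i+1) (by omega) 0 (by omega) h2
      omega
  intro _
  refine ⟨q 0, Walk.cons hwrap.symm p.reverse, ?_⟩
  rw [SimpleGraph.Walk.isHamiltonianCycle_iff_isCycle_and_support_count_tail_eq_one]
  constructor
  · rw [Walk.cons_isCycle_iff]
    constructor
    · rwa [Walk.isPath_reverse_iff]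
    · rw [Walk.edges_reverse, List.mem_reverse]
      exact hedge
  · intro v
    rw [Walk.support_cons, List.tail_cons, Walk.support_reverse, hs]
    rw [List.count_reverse]
    exact List.count_eq_one_of_mem hnodup (hmem v)

lemma cycleFn_of_isHamiltonian [Fintype V] [DecidableEq V] {n : ℕ} (hn : 3 ≤ n)
    (hcard : Fintype.card V = n) (h : G.IsHamiltonian) :
    ∃ q : ℕ → V, (∀ i < n, ∀ j < n, q i = q j → i = j) ∧
      (∀ i, i + 1 < n → G.Adj (q i) (q (i+1))) ∧ G.Adj (q (n-1)) (q 0) := by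
  obtain ⟨a, p, hp⟩ := h (by rw [hcard]; omega)
  have hlen : p.support.length = n + 1 := by
    rw [SimpleGraph.Walk.length_support, hp.length_eq, hcard]
  have hcount := (SimpleGraph.Walk.isHamiltonianCycle_iff_isCycle_and_support_count_tail_eq_one.mp hp).2
  have hnodup : p.support.tail.Nodup := List.nodup_iff_count_le_one.mpr (fun v => (hcount v).le)
  have htlen : p.support.tail.length = n := by
    rw [List.length_tail, hlen]; omega
  have hchain := p.isChain_adj_support
  set q : ℕ → V := fun i => p.support.getD i a with hq
  have hgetb : ∀ i (hi : i < n + 1), q i = p.support.get ⟨i, by omega⟩ := by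
    intro i hi
    simp only [hq, List.getD_eq_getElem _ _ (by omega : i < p.support.length), List.get_eq_getElem]
  obtain ⟨t, ht⟩ : ∃ t, p.support = a :: t := ⟨_, p.support_eq_cons⟩
  have hq0 : q 0 = a := by
    rw [hgetb 0 (by omega), List.get_eq_getElem]
    simp [ht]
  have hqn : q n = a := by
    have h2 := p.getLast_support
    rw [List.getLast_eq_getElem] at h2
    simp only [hlen, Nat.add_sub_cancel] at h2
    rw [hgetb n (by omega), List.get_eq_getElem]
    exact h2
  have htail : ∀ i (hi : i < n), p.support.tail.get ⟨i, by omega⟩ = q (i+1) := by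
    intro i hi
    rw [hgetb (i+1) (by omega)]
    rw [List.get_eq_getElem, List.get_eq_getElem, List.getElem_tail]
  have hinj : ∀ i < n, ∀ j < n, q i = q j → i = j := by
    have hlast : q n = q 0 := by rw [hqn, hq0]
    have key : ∀ i < n, ∀ j < n, i < j → q i = q j → False := by
      intro i hi j hj hij heq
      rcases Nat.eq_zero_or_pos i with rfl | hipos
      · -- q 0 = a = q n, and q j = q 0 means tail indices j-1 = n-1
        have h1 : p.support.tail.get ⟨j-1, by omega⟩ = p.support.tail.get ⟨n-1, by omega⟩ := by
          rw [htail (j-1) (by omega), htail (n-1) (by omega)]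
          have : j - 1 + 1 = j := by omega
          rw [this]
          have : n - 1 + 1 = n := by omega
          rw [this, hqn, ← hq0, ← heq]
        have := List.Nodup.get_inj_iff hnodup |>.mp h1
        simp at this
        omega
      · have h1 : p.support.tail.get ⟨i-1, by omega⟩ = p.support.tail.get ⟨j-1, by omega⟩ := by
          rw [htail (i-1) (by omega), htail (j-1) (by omega)]
          have hi' : i - 1 + 1 = i := by omega
          have hj' : j - 1 + 1 = j := by omega
          rw [hi', hj', heq]
        have := List.Nodup.get_inj_iff hnodup |>.mp h1
        simp at this
        omega
    intro i hi j hj heq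
    rcases lt_trichotomy i j with h' | h' | h'
    · exact absurd heq (fun heq => key i hi j hj h' heq)
    · exact h'
    · exact absurd heq.symm (fun heq => key j hj i hi h' heq)
  have hadj : ∀ i, i + 1 ≤ n → G.Adj (q i) (q (i+1)) := by
    intro i hi
    have := List.isChain_iff_getElem.mp hchain i (by omega)
    rw [hgetb i (by omega), hgetb (i+1) (by omega), List.get_eq_getElem, List.get_eq_getElem]
    exact this
  refine ⟨q, hinj, fun i hi => hadj i (by omega), ?_⟩
  have := hadj (n-1) (by omega)
  have hn1 : n - 1 + 1 = n := by omega
  rw [hn1, hqn, ← hq0] at this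
  exact this

lemma path_helper [Fintype V] {n : ℕ} (hn : 3 ≤ n) {u v : V} (hnadj : ¬ G.Adj u v)
    (f : ZMod n → V) (hinj : Function.Injective f)
    (hadjf : ∀ z : ZMod n, (G ⊔ edge u v).Adj (f z) (f (z+1)))
    (i : ZMod n) (hu : f i = u) (hv : f (i+1) = v) :
    ∃ p : ℕ → V, (∀ a < n, ∀ b < n, p a = p b → a = b) ∧ p 0 = u ∧ p (n-1) = v ∧
      ∀ k, k + 1 < n → G.Adj (p k) (p (k+1)) := by
  haveI : NeZero n := ⟨by omega⟩
  refine ⟨fun k => f (i - (k : ZMod n)), ?_, ?_, ?_, ?_⟩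
  · intro a ha b hb hab
    have h1 : i - (a : ZMod n) = i - (b : ZMod n) := hinj hab
    have h2 : (a : ZMod n) = (b : ZMod n) := by linear_combination -h1
    have := congrArg ZMod.val h2
    rwa [ZMod.val_natCast_of_lt ha, ZMod.val_natCast_of_lt hb] at this
  · simpa using hu
  · have hcast : ((n - 1 : ℕ) : ZMod n) = -1 := by
      have h1 : ((n - 1 : ℕ) : ZMod n) = (n : ℕ) - 1 := by
        push_cast [Nat.cast_sub (by omega : 1 ≤ n)]; ring
      rw [h1, ZMod.natCast_self]; ring
    show f (i - ((n-1 : ℕ) : ZMod n)) = v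
    rw [hcast]
    have : i - (-1) = i + 1 := by ring
    rw [this, hv]
  · intro k hk
    have key : G.Adj (f (i - (k:ZMod n) - 1)) (f (i - (k:ZMod n))) := by
      have hadj' := hadjf (i - (k:ZMod n) - 1)
      have he : i - (k:ZMod n) - 1 + 1 = i - (k:ZMod n) := by ring
      rw [he] at hadj'
      rcases hadj' with h | h
      · exact h
      · exfalso
        rw [edge_adj] at h
        obtain ⟨h', hne'⟩ := h
        rcases h' with ⟨h1, h2⟩ | ⟨h1, h2⟩
        · -- f (i - k - 1) = u = f i
          have : i - (k:ZMod n) - 1 = i := hinj (by rw [h1, hu])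
          have h3 : ((k+1 : ℕ) : ZMod n) = 0 := by push_cast; linear_combination -this
          rw [ZMod.natCast_eq_zero_iff] at h3
          have := Nat.le_of_dvd (by omega) h3
          omega
        · -- f (i - k) = u = f i and f (i - k - 1) = v = f (i+1)
          have e1 : i - (k:ZMod n) = i := hinj (by rw [h2, hu])
          have h3 : ((k : ℕ) : ZMod n) = 0 := by linear_combination -e1
          rw [ZMod.natCast_eq_zero_iff] at h3
          have hk0 : k = 0 := Nat.eq_zero_of_dvd_of_lt h3 (by omega)
          have e2 : i - (k : ZMod n) - 1 = i + 1 := hinj (by rw [h1, hv])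
          have h4 : ((k + 2 : ℕ) : ZMod n) = 0 := by push_cast; linear_combination -e2
          rw [ZMod.natCast_eq_zero_iff] at h4
          have := Nat.le_of_dvd (by omega) h4
          omega
    show G.Adj (f (i - ((k:ℕ) : ZMod n))) (f (i - ((k+1 : ℕ) : ZMod n)))
    have hc : i - ((k+1 : ℕ) : ZMod n) = i - (k:ZMod n) - 1 := by push_cast; ring
    rw [hc]
    exact key.symm

lemma path_of_addEdge_hamiltonian [Fintype V] [DecidableEq V] {n : ℕ} (hn : 3 ≤ n)
    (hcard : Fintype.card V = n) {u v : V} (hG : ¬ G.IsHamiltonian) (hnadj : ¬ G.Adj u v)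
    (hham : (G ⊔ edge u v).IsHamiltonian) :
    ∃ p : ℕ → V, (∀ a < n, ∀ b < n, p a = p b → a = b) ∧ p 0 = u ∧ p (n-1) = v ∧
      ∀ k, k + 1 < n → G.Adj (p k) (p (k+1)) := by
  haveI : NeZero n := ⟨by omega⟩
  haveI : Fact (1 < n) := ⟨by omega⟩
  obtain ⟨q, hqinj, hqadj, hqwrap⟩ := cycleFn_of_isHamiltonian hn hcard hham
  set f : ZMod n → V := fun z => q z.val with hf
  have hfinj : Function.Injective f := by
    intro a b hab
    have := hqinj a.val a.val_lt b.val b.val_lt hab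
    exact ZMod.val_injective n this
  have hfadj : ∀ z : ZMod n, (G ⊔ edge u v).Adj (f z) (f (z+1)) := by
    intro z
    rcases Nat.lt_or_ge z.val (n-1) with h | h
    · have hval : (z + 1).val = z.val + 1 := by
        rw [ZMod.val_add, ZMod.val_one]
        exact Nat.mod_eq_of_lt (by omega)
      show (G ⊔ edge u v).Adj (q z.val) (q (z+1).val)
      rw [hval]
      exact hqadj z.val (by omega)
    · have hz : z.val = n - 1 := by have := z.val_lt; omega
      have hval : (z + 1).val = 0 := by
        rw [ZMod.val_add, ZMod.val_one, hz, Nat.sub_add_cancel (by omega : 1 ≤ n)]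
        exact Nat.mod_self n
      show (G ⊔ edge u v).Adj (q z.val) (q (z+1).val)
      rw [hval, hz]
      exact hqwrap
  have hex : ∃ z : ZMod n, (f z = u ∧ f (z+1) = v) ∨ (f z = v ∧ f (z+1) = u) := by
    by_contra hcon
    push_neg at hcon
    apply hG
    have hGadj : ∀ z : ZMod n, G.Adj (f z) (f (z+1)) := by
      intro z
      rcases hfadj z with h | h
      · exact h
      · rw [edge_adj] at h
        exact absurd h.1 (by have := hcon z; tauto)
    apply isHamiltonian_of_cycleFn hn hcard (fun k => f (k : ZMod n))
    · intro a ha b hb hab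
      have := congrArg ZMod.val (hfinj hab)
      rwa [ZMod.val_natCast_of_lt ha, ZMod.val_natCast_of_lt hb] at this
    · intro k hk
      have hc : ((k+1 : ℕ) : ZMod n) = (k : ZMod n) + 1 := by push_cast; ring
      rw [hc]
      exact hGadj _
    · have hc : ((0 : ℕ) : ZMod n) = ((n-1 : ℕ) : ZMod n) + 1 := by
        have h1 : ((n - 1 : ℕ) : ZMod n) = (n : ℕ) - 1 := by
          push_cast [Nat.cast_sub (by omega : 1 ≤ n)]; ring
        rw [h1, ZMod.natCast_self]; push_cast; ring
      rw [hc]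
      exact hGadj _
  obtain ⟨z, ⟨h1, h2⟩ | ⟨h1, h2⟩⟩ := hex
  · exact path_helper hn hnadj f hfinj hfadj z h1 h2
  · refine path_helper hn hnadj (fun w => f (-w)) (fun a b hab => ?_) (fun w => ?_) (-(z+1)) ?_ ?_
    · have := hfinj hab
      linear_combination -this
    · have := (hfadj (-w-1)).symm
      have he : -w - 1 + 1 = -w := by ring
      rw [he] at this
      show (G ⊔ edge u v).Adj (f (-w)) (f (-(w+1)))
      have he2 : -(w+1) = -w - 1 := by ring
      rw [he2]
      exact this
    · show f (-(-(z+1))) = u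
      have : -(-(z+1)) = z + 1 := by ring
      rw [this, h2]
    · show f (-(-(z+1)+1)) = v
      have : -(-(z+1)+1) = z := by ring
      rw [this, h1]

lemma hamiltonian_of_path_degree [Fintype V] [DecidableEq V] [DecidableRel G.Adj] {n : ℕ}
    (hn : 3 ≤ n) (hcard : Fintype.card V = n) {u v : V} (hnadj : ¬ G.Adj u v)
    (p : ℕ → V) (hinj : ∀ a < n, ∀ b < n, p a = p b → a = b)
    (hp0 : p 0 = u) (hpl : p (n-1) = v)
    (hadj : ∀ k, k + 1 < n → G.Adj (p k) (p (k+1)))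
    (hdeg : n ≤ G.degree u + G.degree v) : G.IsHamiltonian := by
  have hsurj : ∀ w : V, ∃ k < n, p k = w := by
    intro w
    have himg : Finset.image p (Finset.range n) = Finset.univ := by
      apply Finset.eq_univ_of_card
      rw [Finset.card_image_of_injOn, Finset.card_range, hcard]
      intro i hi j hj hij
      exact hinj i (Finset.mem_range.mp hi) j (Finset.mem_range.mp hj) hij
    have : w ∈ Finset.image p (Finset.range n) := himg ▸ Finset.mem_univ w
    obtain ⟨k, hk, hkw⟩ := Finset.mem_image.mp this
    exact ⟨k, Finset.mem_range.mp hk, hkw⟩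
  set A := (Finset.range (n-1)).filter (fun j => G.Adj u (p (j+1))) with hA
  set B := (Finset.range (n-1)).filter (fun j => G.Adj v (p j)) with hB
  have hcardA : A.card = G.degree u := by
    rw [← SimpleGraph.card_neighborFinset_eq_degree]
    apply Finset.card_bij (fun j _ => p (j+1))
    · intro j hj
      rw [SimpleGraph.mem_neighborFinset]
      exact (Finset.mem_filter.mp hj).2
    · intro j hj j' hj' hjj'
      have h1 := Finset.mem_range.mp (Finset.mem_filter.mp hj).1
      have h2 := Finset.mem_range.mp (Finset.mem_filter.mp hj').1
      have := hinj (j+1) (by omega) (j'+1) (by omega) hjj'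
      omega
    · intro w hw
      rw [SimpleGraph.mem_neighborFinset] at hw
      obtain ⟨k, hk, rfl⟩ := hsurj w
      have hk0 : k ≠ 0 := by
        intro h
        subst h
        rw [hp0] at hw
        exact G.irrefl hw
      refine ⟨k - 1, Finset.mem_filter.mpr ⟨Finset.mem_range.mpr (by omega), ?_⟩, ?_⟩
      · have : k - 1 + 1 = k := by omega
        rw [this]; exact hw
      · have : k - 1 + 1 = k := by omega
        rw [this]
  have hcardB : B.card = G.degree v := by
    rw [← SimpleGraph.card_neighborFinset_eq_degree]
    apply Finset.card_bij (fun j _ => p j)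
    · intro j hj
      rw [SimpleGraph.mem_neighborFinset]
      exact (Finset.mem_filter.mp hj).2
    · intro j hj j' hj' hjj'
      have h1 := Finset.mem_range.mp (Finset.mem_filter.mp hj).1
      have h2 := Finset.mem_range.mp (Finset.mem_filter.mp hj').1
      exact hinj j (by omega) j' (by omega) hjj'
    · intro w hw
      rw [SimpleGraph.mem_neighborFinset] at hw
      obtain ⟨k, hk, rfl⟩ := hsurj w
      have hkl : k ≠ n - 1 := by
        intro h
        subst h
        rw [hpl] at hw
        exact G.irrefl hw
      exact ⟨k, Finset.mem_filter.mpr ⟨Finset.mem_range.mpr (by omega), hw⟩, rfl⟩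
  have hinter : (A ∩ B).Nonempty := by
    rw [← Finset.card_pos]
    have hun : (A ∪ B).card ≤ n - 1 := by
      calc (A ∪ B).card ≤ (Finset.range (n-1)).card := by
            apply Finset.card_le_card
            intro x hx
            rcases Finset.mem_union.mp hx with h | h
            · exact (Finset.mem_filter.mp h).1
            · exact (Finset.mem_filter.mp h).1
        _ = n - 1 := Finset.card_range _
    have := Finset.card_union_add_card_inter A B
    omega
  obtain ⟨j, hj⟩ := hinter
  obtain ⟨hjA, hjB⟩ := Finset.mem_inter.mp hj
  have hjr : j < n - 1 := Finset.mem_range.mp (Finset.mem_filter.mp hjA).1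
  have hju : G.Adj u (p (j+1)) := (Finset.mem_filter.mp hjA).2
  have hjv : G.Adj v (p j) := (Finset.mem_filter.mp hjB).2
  apply isHamiltonian_of_cycleFn hn hcard (fun k => if k ≤ j then p k else p (n + j - k))
  · intro a ha b hb hab
    split_ifs at hab with h1 h2 h2
    · exact hinj a (by omega) b (by omega) hab
    · have := hinj a (by omega) (n + j - b) (by omega) hab
      omega
    · have := hinj (n + j - a) (by omega) b (by omega) hab
      omega
    · have := hinj (n + j - a) (by omega) (n + j - b) (by omega) hab
      omega
  · intro k hk
    rcases Nat.lt_trichotomy (k+1) (j+1) with h | h | h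
    · rw [if_pos (by omega : k ≤ j), if_pos (by omega : k + 1 ≤ j)]
      exact hadj k hk
    · have hkj : k = j := by omega
      subst hkj
      rw [if_pos le_rfl, if_neg (by omega)]
      have : n + k - (k + 1) = n - 1 := by omega
      rw [this, hpl]
      exact hjv.symm
    · rw [if_neg (by omega), if_neg (by omega)]
      have h2 : n + j - (k+1) + 1 = n + j - k := by omega
      have := hadj (n + j - (k+1)) (by omega)
      rw [h2] at this
      exact this.symm
  · rw [if_neg (by omega), if_pos (by omega : (0:ℕ) ≤ j)]
    have : n + j - (n - 1) = j + 1 := by omega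
    rw [this, hp0]
    exact hju.symm

lemma edge_count_of_low_degree [Fintype V] [DecidableEq V] [DecidableRel G.Adj] {n : ℕ}
    (hn : 3 ≤ n) (hcard : Fintype.card V = n) {u v : V} (hne : u ≠ v)
    (hdeg : G.degree u + G.degree v ≤ n - 1) :
    G.edgeFinset.card ≤ (n-1).choose 2 + 1 := by
  classical
  set T := G.edgeFinset.filter (fun e => u ∈ e ∨ v ∈ e) with hT
  set N := G.edgeFinset.filter (fun e => ¬(u ∈ e ∨ v ∈ e)) with hN
  have hsplit : T.card + N.card = G.edgeFinset.card :=
    Finset.card_filter_add_card_filter_not _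
  have hTle : T.card ≤ n - 1 := by
    calc T.card ≤ (G.incidenceFinset u ∪ G.incidenceFinset v).card := by
          apply Finset.card_le_card
          intro e he
          obtain ⟨he1, he2⟩ := Finset.mem_filter.mp he
          rw [SimpleGraph.mem_edgeFinset] at he1
          rcases he2 with h | h
          · exact Finset.mem_union_left _ (by rw [SimpleGraph.mem_incidenceFinset]; exact ⟨he1, h⟩)
          · exact Finset.mem_union_right _ (by rw [SimpleGraph.mem_incidenceFinset]; exact ⟨he1, h⟩)
      _ ≤ (G.incidenceFinset u).card + (G.incidenceFinset v).card := Finset.card_union_le _ _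
      _ = G.degree u + G.degree v := by
          rw [SimpleGraph.card_incidenceFinset_eq_degree, SimpleGraph.card_incidenceFinset_eq_degree]
      _ ≤ n - 1 := hdeg
  have hNle : N.card ≤ (n-2).choose 2 := by
    have hsub : N ⊆ ((Finset.univ \ {u, v} : Finset V).offDiag).image Sym2.mk.uncurry := by
      intro e he
      induction e with
      | _ a b =>
        obtain ⟨he1, he2⟩ := Finset.mem_filter.mp he
        rw [SimpleGraph.mem_edgeFinset, SimpleGraph.mem_edgeSet] at he1
        push_neg at he2
        obtain ⟨hu', hv'⟩ := he2
        simp only [Sym2.mem_iff, not_or] at hu' hv'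
        apply Finset.mem_image.mpr
        refine ⟨(a, b), Finset.mem_offDiag.mpr ⟨?_, ?_, G.ne_of_adj he1⟩, rfl⟩
        · simp only [Finset.mem_sdiff, Finset.mem_univ, true_and, Finset.mem_insert,
            Finset.mem_singleton, not_or]
          exact ⟨fun h => hu'.1 h.symm, fun h => hv'.1 h.symm⟩
        · simp only [Finset.mem_sdiff, Finset.mem_univ, true_and, Finset.mem_insert,
            Finset.mem_singleton, not_or]
          exact ⟨fun h => hu'.2 h.symm, fun h => hv'.2 h.symm⟩
    calc N.card ≤ _ := Finset.card_le_card hsub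
      _ = ((Finset.univ \ {u, v} : Finset V).card).choose 2 := Sym2.card_image_offDiag _
      _ = (n-2).choose 2 := by
          congr 1
          rw [Finset.card_sdiff_of_subset (Finset.subset_univ _), Finset.card_univ, hcard,
            Finset.card_insert_of_notMem (by simp [hne]), Finset.card_singleton]
  have harith : (n - 1) + (n-2).choose 2 = (n-1).choose 2 + 1 := by
    have h1 : n - 1 = (n - 2) + 1 := by omega
    have h2 : ((n-2)+1).choose 2 = (n-2).choose 1 + (n-2).choose 2 := Nat.choose_succ_succ _ _
    rw [h1, h2, Nat.choose_one_right]
    omega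
  omega

lemma top_hamiltonian {n : ℕ} (hn : 3 ≤ n) : (⊤ : SimpleGraph (Fin n)).IsHamiltonian := by
  apply isHamiltonian_of_cycleFn hn (Fintype.card_fin n)
    (fun k => (⟨k % n, Nat.mod_lt _ (by omega)⟩ : Fin n))
  · intro a ha b hb hab
    simp only [Fin.mk.injEq] at hab
    rwa [Nat.mod_eq_of_lt ha, Nat.mod_eq_of_lt hb] at hab
  · intro k hk
    simp only [SimpleGraph.top_adj, ne_eq, Fin.mk.injEq]
    rw [Nat.mod_eq_of_lt (by omega), Nat.mod_eq_of_lt (by omega)]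
    omega
  · simp only [SimpleGraph.top_adj, ne_eq, Fin.mk.injEq]
    rw [Nat.mod_eq_of_lt (by omega), Nat.mod_eq_of_lt (by omega)]
    omega

lemma ore_aux (n : ℕ) (hn : 3 ≤ n) : ∀ (m : ℕ) (G : SimpleGraph (Fin n))
    [inst : DecidableRel G.Adj], ¬ G.IsHamiltonian → n.choose 2 - G.edgeFinset.card ≤ m →
    G.edgeFinset.card ≤ (n-1).choose 2 + 1 := by
  intro m
  induction m with
  | zero =>
    intro G inst hG hm
    exfalso
    have hle : G.edgeFinset.card ≤ n.choose 2 := by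
      have := G.card_edgeFinset_le_card_choose_two
      rwa [Fintype.card_fin] at this
    classical
    have htop : G.edgeFinset.card = (⊤ : SimpleGraph (Fin n)).edgeFinset.card := by
      rw [SimpleGraph.card_edgeFinset_top_eq_card_choose_two, Fintype.card_fin]
      omega
    have hsub : G.edgeFinset ⊆ (⊤ : SimpleGraph (Fin n)).edgeFinset :=
      SimpleGraph.edgeFinset_mono le_top
    have heq : G.edgeFinset = (⊤ : SimpleGraph (Fin n)).edgeFinset :=
      Finset.eq_of_subset_of_card_le hsub (by omega)
    rw [SimpleGraph.edgeFinset_inj] at heq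
    rw [heq] at hG
    exact hG (top_hamiltonian hn)
  | succ m ih =>
    intro G inst hG hm
    obtain ⟨u, v, hne, hnadj⟩ : ∃ u v, u ≠ v ∧ ¬ G.Adj u v := by
      by_contra hc
      push_neg at hc
      have hteq : G = ⊤ := by
        ext a b
        simp only [SimpleGraph.top_adj]
        exact ⟨fun h => G.ne_of_adj h, fun h => hc a b h⟩
      rw [hteq] at hG
      exact hG (top_hamiltonian hn)
    by_cases hdeg : G.degree u + G.degree v ≤ n - 1
    · exact edge_count_of_low_degree hn (Fintype.card_fin n) hne hdeg
    · have hdeg' : n ≤ G.degree u + G.degree v := by omega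
      set G' := G ⊔ edge u v with hG'
      haveI instG' : DecidableRel G'.Adj := fun a b =>
        decidable_of_iff _ (SimpleGraph.sup_adj _ _ _ _).symm
      by_cases hham : G'.IsHamiltonian
      · exfalso
        obtain ⟨p, hpinj, hp0, hpl, hpadj⟩ :=
          path_of_addEdge_hamiltonian hn (Fintype.card_fin n) hG hnadj hham
        exact hG (hamiltonian_of_path_degree hn (Fintype.card_fin n) hnadj p hpinj hp0 hpl
          hpadj hdeg')
      · have hlt : G.edgeFinset.card < G'.edgeFinset.card := by
          apply Finset.card_lt_card
          rw [Finset.ssubset_iff_of_subset (SimpleGraph.edgeFinset_mono le_sup_left)]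
          refine ⟨s(u, v), ?_, ?_⟩
          · rw [SimpleGraph.mem_edgeFinset, SimpleGraph.mem_edgeSet]
            exact Or.inr ((edge_adj u v u v).mpr ⟨Or.inl ⟨rfl, rfl⟩, hne⟩)
          · rw [SimpleGraph.mem_edgeFinset, SimpleGraph.mem_edgeSet]
            exact hnadj
        have hle' : G'.edgeFinset.card ≤ n.choose 2 := by
          have := G'.card_edgeFinset_le_card_choose_two
          rwa [Fintype.card_fin] at this
        have hmeas : n.choose 2 - G'.edgeFinset.card ≤ m := by omega
        have hbound := @ih G' instG' hham (by
          convert hmeas using 4 <;> exact Subsingleton.elim _ _)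
        have hbound' : G'.edgeFinset.card ≤ (n-1).choose 2 + 1 := by
          convert hbound using 3 <;> exact Subsingleton.elim _ _
        omega

theorem ore_nonhamiltonian_edge_bound (n : ℕ) (hn : 3 ≤ n) (G : SimpleGraph (Fin n))
    [DecidableRel G.Adj] (hG : ¬ G.IsHamiltonian) :
    G.edgeFinset.card ≤ (n - 1).choose 2 + 1 := by
  exact ore_aux n hn (n.choose 2) G hG (Nat.sub_le _ _)
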